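/- arXiv:2411.16562 — 8 statements merged into one kernel-verified Lean document; each statement's English description precedes it below -/
import Mathlib

section
/- Let K be a complete nonarchimedean valued field and 0 < \alpha < \beta. Every unit of the ring K\langle\alpha/t, t/\beta\} of Laurent series convergent on the half-open annulus \alpha \le |t| < \beta has bounded coefficients, i.e., lies in K\langle\alpha/t, t/\beta]]_0. Consequently the unit groups of K\langle\alpha/t,t/\beta\} and K\langle\alpha/t,t/\beta]]_0 coincide. -/
open Filter Topology

/-- Convolution product of two Laurent coefficient functions (the multiplication of
Laurent series), defined via an unconditional `tsum`. -/
noncomputable def laurentMul {K : Type*} [NontriviallyNormedField K]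
    (x y : ℤ → K) : ℤ → K :=
  fun i => ∑' j : ℤ, x j * y (i - j)

private lemma aux_zpow_tendsto_atTop {s : ℝ} (h0 : 0 < s) (h1 : s < 1) :
    Tendsto (fun j : ℤ => s ^ j) atTop (𝓝 0) := by
  have hnat : Tendsto (fun n : ℕ => s ^ n) atTop (𝓝 0) :=
    tendsto_pow_atTop_nhds_zero_of_lt_one h0.le h1
  have htoNat : Tendsto Int.toNat atTop atTop := by
    refine tendsto_atTop_atTop.mpr fun b => ⟨(b : ℤ), fun j hj => ?_⟩
    omega
  refine (hnat.comp htoNat).congr' ?_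
  filter_upwards [eventually_ge_atTop (0 : ℤ)] with j hj
  simp only [Function.comp_apply]
  rw [← zpow_natCast, Int.toNat_of_nonneg hj]

private lemma aux_zpow_tendsto_atBot {s : ℝ} (h1 : 1 < s) :
    Tendsto (fun j : ℤ => s ^ j) atBot (𝓝 0) := by
  have h0 : 0 < s := lt_trans one_pos h1
  have hs : s⁻¹ < 1 := by
    have hinv : s⁻¹ * s = 1 := inv_mul_cancel₀ h0.ne'
    nlinarith
  have hinv : Tendsto (fun j : ℤ => s⁻¹ ^ j) atTop (𝓝 0) :=
    aux_zpow_tendsto_atTop (inv_pos.mpr h0) hs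
  refine (hinv.comp tendsto_neg_atBot_atTop).congr fun j => ?_
  simp [zpow_neg, inv_zpow]

private lemma exists_good_max (f : ℤ → ℝ) (h0 : ∀ j, 0 ≤ f j)
    (hf : Tendsto f cofinite (𝓝 0)) {i : ℤ} (hi : 0 < f i) :
    ∃ m, 0 < f m ∧ (∀ j, f j ≤ f m) ∧ ∀ j, m < j → f j < f m := by
  have hev : ∀ᶠ j in cofinite, f j < f i := hf.eventually_lt_const hi
  have hfin : {j : ℤ | f i ≤ f j}.Finite := by
    have := Filter.eventually_cofinite.mp hev
    simpa [not_lt] using this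
  have hiS : i ∈ hfin.toFinset := by simp
  obtain ⟨m, hmS, hm⟩ := hfin.toFinset.exists_max_image f ⟨i, hiS⟩
  have hmax : ∀ j, f j ≤ f m := by
    intro j
    by_cases hj : j ∈ hfin.toFinset
    · exact hm j hj
    · have : f j < f i := by
        simp only [Set.Finite.mem_toFinset, Set.mem_setOf_eq, not_le] at hj
        exact hj
      exact this.le.trans (hm i hiS)
  have hmpos : 0 < f m := hi.trans_le (hm i hiS)
  have hA : {j : ℤ | f j = f m}.Finite := by
    refine hfin.subset fun j hj => ?_
    simp only [Set.mem_setOf_eq] at *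
    rw [hj]
    exact hm i hiS
  have hmA : m ∈ hA.toFinset := by simp
  set m₀ := hA.toFinset.max' ⟨m, hmA⟩ with hm₀def
  have hm₀A : m₀ ∈ hA.toFinset := hA.toFinset.max'_mem _
  have hfm₀ : f m₀ = f m := by simpa using hm₀A
  refine ⟨m₀, by rw [hfm₀]; exact hmpos, fun j => by rw [hfm₀]; exact hmax j, fun j hj => ?_⟩
  rw [hfm₀]
  rcases lt_or_eq_of_le (hmax j) with h | h
  · exact h
  · exfalso
    have hjA : j ∈ hA.toFinset := by simpa using h
    exact absurd (hA.toFinset.le_max' j hjA) (not_le.mpr hj)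

private lemma key_mul_le_one {K : Type*} [NontriviallyNormedField K] [CompleteSpace K]
    [IsUltrametricDist K] {x y : ℤ → K} {γ : ℝ} (hγ : 0 < γ)
    (hx : Tendsto (fun j : ℤ => ‖x j‖ * γ ^ j) cofinite (𝓝 0))
    (hy : Tendsto (fun j : ℤ => ‖y j‖ * γ ^ j) cofinite (𝓝 0))
    (hunit : laurentMul x y = fun i => if i = 0 then (1 : K) else 0)
    (i k : ℤ) : (‖x i‖ * γ ^ i) * (‖y k‖ * γ ^ k) ≤ 1 := by
  classical
  set fx : ℤ → ℝ := fun j => ‖x j‖ * γ ^ j with hfx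
  set fy : ℤ → ℝ := fun j => ‖y j‖ * γ ^ j with hfy
  have hγj : ∀ m : ℤ, (0:ℝ) < γ ^ m := fun m => zpow_pos hγ m
  have hfx0 : ∀ j, 0 ≤ fx j := fun j => mul_nonneg (norm_nonneg _) (hγj j).le
  have hfy0 : ∀ j, 0 ≤ fy j := fun j => mul_nonneg (norm_nonneg _) (hγj j).le
  by_cases hxi : x i = 0
  · simp [hfx, hxi, mul_nonneg (hfy0 k) (hγj k).le]
  by_cases hyk : y k = 0
  · simp [hfy, hyk, mul_nonneg (hfx0 i) (hγj i).le]
  have hxipos : 0 < fx i := mul_pos (norm_pos_iff.mpr hxi) (hγj i)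
  have hykpos : 0 < fy k := mul_pos (norm_pos_iff.mpr hyk) (hγj k)
  obtain ⟨i₀, hi₀pos, hi₀max, hi₀strict⟩ := exists_good_max fx hfx0 hx hxipos
  obtain ⟨j₀, hj₀pos, hj₀max, hj₀strict⟩ := exists_good_max fy hfy0 hy hykpos
  set N : ℤ := i₀ + j₀ with hN
  set t : ℤ → K := fun j => x j * y (N - j) with ht
  have hkey : ∀ j, ‖t j‖ * γ ^ N = fx j * fy (N - j) := by
    intro j
    have hz : γ ^ N = γ ^ j * γ ^ (N - j) := by
      rw [← zpow_add₀ hγ.ne']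
      congr 1
      ring
    simp only [ht, hfx, hfy, norm_mul]
    rw [hz]
    ring
  have hti₀ : ‖t i₀‖ * γ ^ N = fx i₀ * fy j₀ := by
    have := hkey i₀
    rwa [show N - i₀ = j₀ by omega] at this
  have hnormpos : 0 < ‖t i₀‖ := by
    have h2 : 0 < ‖t i₀‖ * γ ^ N := by
      rw [hti₀]; exact mul_pos hi₀pos hj₀pos
    nlinarith [norm_nonneg (t i₀), hγj N]
  have hstrict : ∀ j, j ≠ i₀ → ‖t j‖ < ‖t i₀‖ := by
    intro j hj
    have hlt : fx j * fy (N - j) < fx i₀ * fy j₀ := by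
      rcases hj.lt_or_gt with h | h
      · have h2 : j₀ < N - j := by omega
        calc fx j * fy (N - j) ≤ fx i₀ * fy (N - j) :=
              mul_le_mul_of_nonneg_right (hi₀max j) (hfy0 _)
          _ < fx i₀ * fy j₀ := mul_lt_mul_of_pos_left (hj₀strict _ h2) hi₀pos
      · calc fx j * fy (N - j) ≤ fx j * fy j₀ :=
              mul_le_mul_of_nonneg_left (hj₀max _) (hfx0 j)
          _ < fx i₀ * fy j₀ := mul_lt_mul_of_pos_right (hi₀strict j h) hj₀pos
    have h3 : ‖t j‖ * γ ^ N < ‖t i₀‖ * γ ^ N := by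
      rw [hkey j, hti₀]
      exact hlt
    exact lt_of_mul_lt_mul_right h3 (hγj N).le
  have htcof : Tendsto (fun j => ‖t j‖) cofinite (𝓝 0) := by
    have hyc : Tendsto (fun j : ℤ => fy (N - j)) cofinite (𝓝 0) := by
      exact hy.comp (sub_right_injective.tendsto_cofinite)
    have hb : Tendsto (fun j : ℤ => (fx i₀ / γ ^ N) * fy (N - j)) cofinite (𝓝 0) := by
      simpa using hyc.const_mul (fx i₀ / γ ^ N)
    apply squeeze_zero (fun j => norm_nonneg _) (fun j => ?_) hb
    rw [div_mul_eq_mul_div, le_div_iff₀ (hγj N), hkey j]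
    exact mul_le_mul_of_nonneg_right (hi₀max j) (hfy0 _)
  have hsummable : Summable t :=
    NonarchimedeanAddGroup.summable_of_tendsto_cofinite_zero
      (tendsto_zero_iff_norm_tendsto_zero.mpr htcof)
  have hsplit := Summable.tsum_eq_add_tsum_ite hsummable i₀
  set g : ℤ → K := fun j => if j = i₀ then 0 else t j with hg
  have hrest : ‖∑' j, g j‖ < ‖t i₀‖ := by
    by_cases hgz : ∀ j, g j = 0
    · have hzero : ∑' j, g j = ∑' _ : ℤ, (0 : K) := tsum_congr hgz
      rw [hzero, tsum_zero, norm_zero]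
      exact hnormpos
    · push_neg at hgz
      obtain ⟨w, hw⟩ := hgz
      have hgcof : Tendsto (fun j => ‖g j‖) cofinite (𝓝 0) := by
        apply squeeze_zero (fun j => norm_nonneg _) (fun j => ?_) htcof
        by_cases hj : j = i₀ <;> simp [hg, hj]
      obtain ⟨m, hmpos, hmmax, -⟩ := exists_good_max (fun j => ‖g j‖)
        (fun j => norm_nonneg _) hgcof (norm_pos_iff.mpr hw)
      have hmne : m ≠ i₀ := by
        intro h
        rw [h] at hmpos
        simp [hg] at hmpos
      have h1 : ‖∑' j, g j‖ ≤ ‖g m‖ :=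
        IsUltrametricDist.norm_tsum_le_of_forall_le_of_nonneg (norm_nonneg _) hmmax
      refine h1.trans_lt ?_
      have h2 : ‖g m‖ = ‖t m‖ := by simp [hg, hmne]
      rw [h2]
      exact hstrict m hmne
  have hvaldef : laurentMul x y N = ∑' j, t j := rfl
  have hnorm_eq : ‖laurentMul x y N‖ = ‖t i₀‖ := by
    rw [hvaldef, hsplit, IsUltrametricDist.norm_add_eq_max_of_norm_ne_norm hrest.ne']
    exact max_eq_left hrest.le
  have hδ : laurentMul x y N = if N = 0 then (1 : K) else 0 := by rw [hunit]
  by_cases hN0 : N = 0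
  · have h1 : ‖t i₀‖ = 1 := by
      rw [← hnorm_eq, hδ, if_pos hN0, norm_one]
    have hL : fx i₀ * fy j₀ = 1 := by
      rw [← hti₀, h1, one_mul, hN0, zpow_zero]
    calc fx i * fy k ≤ fx i₀ * fy j₀ :=
          mul_le_mul (hi₀max i) (hj₀max k) (hfy0 k) (hfx0 i₀)
      _ = 1 := hL
  · exfalso
    have h1 : ‖t i₀‖ = 0 := by
      rw [← hnorm_eq, hδ, if_neg hN0, norm_zero]
    exact hnormpos.ne' h1

/-- For `0 < α < β`, every unit of the ring `K⟨α/t, t/β}` of Laurent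
series convergent on the half-open annulus `α ≤ |t| < β` has bounded coefficients,
i.e. lies in `K⟨α/t, t/β]]₀`: if `x` and `y` both converge on the half-open annulus
and `x * y = 1` (as Laurent series), then `sup_{i ≥ 0} ‖x i‖ β^i < ∞`.
Consequently the unit groups of `K⟨α/t,t/β}` and `K⟨α/t,t/β]]₀` coincide. -/
theorem stmt2 (K : Type*) [NontriviallyNormedField K] [CompleteSpace K]
    [IsUltrametricDist K] (α β : ℝ) (hα : 0 < α) (hαβ : α < β)
    (x y : ℤ → K)
    (hxneg : Tendsto (fun i : ℤ => ‖x i‖ * α ^ i) atBot (𝓝 0))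
    (hxpos : ∀ γ ∈ Set.Ioo (0 : ℝ) β, Tendsto (fun i : ℤ => ‖x i‖ * γ ^ i) atTop (𝓝 0))
    (hyneg : Tendsto (fun i : ℤ => ‖y i‖ * α ^ i) atBot (𝓝 0))
    (hypos : ∀ γ ∈ Set.Ioo (0 : ℝ) β, Tendsto (fun i : ℤ => ‖y i‖ * γ ^ i) atTop (𝓝 0))
    (hunit : laurentMul x y = fun i => if i = 0 then (1 : K) else 0) :
    ∃ C : ℝ, ∀ i : ℤ, 0 ≤ i → ‖x i‖ * β ^ i ≤ C := by
  classical
  have hβ0 : (0:ℝ) < β := hα.trans hαβ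
  have h1 : laurentMul x y 0 = 1 := by rw [hunit]; simp
  obtain ⟨k, hk⟩ : ∃ k, y k ≠ 0 := by
    by_contra h
    push_neg at h
    have h0 : laurentMul x y 0 = 0 := by simp [laurentMul, h]
    rw [h0] at h1
    exact zero_ne_one h1
  have hcof : ∀ (z : ℤ → K), Tendsto (fun i : ℤ => ‖z i‖ * α ^ i) atBot (𝓝 0) →
      (∀ γ ∈ Set.Ioo (0:ℝ) β, Tendsto (fun i : ℤ => ‖z i‖ * γ ^ i) atTop (𝓝 0)) →
      ∀ γ : ℝ, α < γ → γ < β → Tendsto (fun j : ℤ => ‖z j‖ * γ ^ j) cofinite (𝓝 0) := by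
    intro z hzneg hzpos γ hγ1 hγ2
    have hγ0 : 0 < γ := hα.trans hγ1
    rw [Int.cofinite_eq, tendsto_sup]
    constructor
    · have hr : 1 < γ / α := (one_lt_div hα).mpr hγ1
      have h2 : Tendsto (fun j : ℤ => (γ / α) ^ j) atBot (𝓝 0) := aux_zpow_tendsto_atBot hr
      have h3 : Tendsto (fun j : ℤ => (‖z j‖ * α ^ j) * (γ / α) ^ j) atBot (𝓝 0) := by
        simpa using hzneg.mul h2
      refine h3.congr fun j => ?_
      rw [mul_assoc]
      congr 1
      rw [div_zpow]
      field_simp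
    · exact hzpos γ ⟨hγ0, hγ2⟩
  have key : ∀ γ : ℝ, α < γ → γ < β → ∀ i : ℤ, (‖x i‖ * γ ^ i) * (‖y k‖ * γ ^ k) ≤ 1 :=
    fun γ h1' h2' i =>
      key_mul_le_one (hα.trans h1') (hcof x hxneg hxpos γ h1' h2')
        (hcof y hyneg hypos γ h1' h2') hunit i k
  have hβle : ∀ i : ℤ, (‖x i‖ * β ^ i) * (‖y k‖ * β ^ k) ≤ 1 := by
    intro i
    have hnb : (𝓝[Set.Ioo α β] β).NeBot := right_nhdsWithin_Ioo_neBot hαβ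
    have hc : ∀ m : ℤ, Tendsto (fun γ : ℝ => γ ^ m) (𝓝[Set.Ioo α β] β) (𝓝 (β ^ m)) :=
      fun m => (continuousAt_zpow₀ β m (Or.inl hβ0.ne')).continuousWithinAt
    have hT : Tendsto (fun γ : ℝ => (‖x i‖ * γ ^ i) * (‖y k‖ * γ ^ k)) (𝓝[Set.Ioo α β] β)
        (𝓝 ((‖x i‖ * β ^ i) * (‖y k‖ * β ^ k))) :=
      ((hc i).const_mul ‖x i‖).mul ((hc k).const_mul ‖y k‖)
    refine le_of_tendsto hT ?_
    filter_upwards [self_mem_nhdsWithin] with γ hγ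
    exact key γ hγ.1 hγ.2 i
  have hykpos : 0 < ‖y k‖ * β ^ k := mul_pos (norm_pos_iff.mpr hk) (zpow_pos hβ0 k)
  refine ⟨(‖y k‖ * β ^ k)⁻¹, fun i _ => ?_⟩
  calc ‖x i‖ * β ^ i = ((‖x i‖ * β ^ i) * (‖y k‖ * β ^ k)) * (‖y k‖ * β ^ k)⁻¹ := by
        field_simp
    _ ≤ 1 * (‖y k‖ * β ^ k)⁻¹ :=
        mul_le_mul_of_nonneg_right (hβle i) (inv_nonneg.mpr hykpos.le)
    _ = (‖y k‖ * β ^ k)⁻¹ := one_mul _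
end

section
/- Let K be a complete nonarchimedean valued field and \beta > 0. Every unit of the ring K\{t/\beta\} of power series converging on the open disc |t| < \beta is a bounded power series, i.e., lies in K[[t/\beta]]_0. -/
open Filter Topology PowerSeries

/-- A nonnegative sequence tending to zero with positive first term attains its
maximum at some minimal index. -/
private lemma exists_max_of_tendsto_zero {A : ℕ → ℝ} (h : Tendsto A atTop (𝓝 0))
    (h0 : 0 < A 0) : ∃ i₀ : ℕ, (∀ j, A j ≤ A i₀) ∧ (∀ i < i₀, A i < A i₀) := by
  classical
  have hev : ∀ᶠ i in atTop, A i < A 0 := h.eventually_lt_const h0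
  obtain ⟨N, hN⟩ := eventually_atTop.mp hev
  obtain ⟨m, hm, hmax⟩ := Finset.exists_max_image (Finset.range (N + 1)) A
    ⟨0, Finset.mem_range.mpr (Nat.succ_pos N)⟩
  have hex : ∃ i, ∀ j, A j ≤ A i := by
    refine ⟨m, fun j => ?_⟩
    by_cases hj : j ≤ N
    · exact hmax j (Finset.mem_range.mpr (Nat.lt_succ_of_le hj))
    · exact le_trans (hN j (le_of_not_ge hj)).le
        (hmax 0 (Finset.mem_range.mpr (Nat.succ_pos N)))
  refine ⟨Nat.find hex, Nat.find_spec hex, fun i hi => ?_⟩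
  have := Nat.find_min hex hi
  push_neg at this
  obtain ⟨j, hj⟩ := this
  exact lt_of_lt_of_le hj (Nat.find_spec hex j)

/-- For `β > 0`, every unit of the ring `K{t/β}` of power series
converging on the open disc `|t| < β` is a bounded power series, i.e. lies in
`K[[t/β]]₀`: if `f * g = 1` with both `f, g` convergent on the open disc of radius
`β`, then `sup_i ‖coeff i f‖ β^i < ∞`. -/
theorem stmt3 (K : Type*) [NontriviallyNormedField K] [CompleteSpace K]
    [IsUltrametricDist K] (β : ℝ) (hβ : 0 < β) (f g : PowerSeries K)
    (hf : ∀ γ ∈ Set.Ioo (0 : ℝ) β,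
      Tendsto (fun i : ℕ => ‖coeff i f‖ * γ ^ i) atTop (𝓝 0))
    (hg : ∀ γ ∈ Set.Ioo (0 : ℝ) β,
      Tendsto (fun i : ℕ => ‖coeff i g‖ * γ ^ i) atTop (𝓝 0))
    (hfg : f * g = 1) :
    ∃ C : ℝ, ∀ i : ℕ, ‖coeff i f‖ * β ^ i ≤ C := by
  -- the constant terms multiply to 1
  have ha0b0 : coeff 0 f * coeff 0 g = 1 := by
    have h0 := congrArg (coeff 0) hfg
    simpa [coeff_mul] using h0
  have ha0 : (0 : ℝ) < ‖coeff 0 f‖ := by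
    rw [norm_pos_iff]
    intro h
    rw [h, zero_mul] at ha0b0
    exact zero_ne_one ha0b0
  have hb0 : (0 : ℝ) < ‖coeff 0 g‖ := by
    rw [norm_pos_iff]
    intro h
    rw [h, mul_zero] at ha0b0
    exact zero_ne_one ha0b0
  -- Key claim: for every γ ∈ (0, β) and every i, ‖aᵢ‖ γ^i ≤ ‖a₀‖.
  have key : ∀ γ ∈ Set.Ioo (0 : ℝ) β, ∀ i : ℕ,
      ‖coeff i f‖ * γ ^ i ≤ ‖coeff 0 f‖ := by
    intro γ hγ i
    set A : ℕ → ℝ := fun i => ‖coeff i f‖ * γ ^ i with hA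
    set B : ℕ → ℝ := fun j => ‖coeff j g‖ * γ ^ j with hB
    have hγ0 : (0 : ℝ) < γ := hγ.1
    have hA0 : 0 < A 0 := by simpa [hA] using ha0
    have hB0 : 0 < B 0 := by simpa [hB] using hb0
    obtain ⟨i₀, hi₀max, hi₀min⟩ := exists_max_of_tendsto_zero (hf γ hγ) hA0
    obtain ⟨j₀, hj₀max, hj₀min⟩ := exists_max_of_tendsto_zero (hg γ hγ) hB0
    have hAi₀ : 0 < A i₀ := lt_of_lt_of_le hA0 (hi₀max 0)
    have hBj₀ : 0 < B j₀ := lt_of_lt_of_le hB0 (hj₀max 0)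
    -- main step: i₀ = 0
    have hi₀0 : i₀ = 0 := by
      by_contra hne
      set n : ℕ := i₀ + j₀ with hn
      have hnpos : 0 < n := Nat.lt_of_lt_of_le (Nat.pos_of_ne_zero hne) (Nat.le_add_right _ _)
      -- the coefficient of f*g at n is 0
      have hc0 : (∑ p ∈ Finset.HasAntidiagonal.antidiagonal n, coeff p.1 f * coeff p.2 g) = 0 := by
        have h0 := congrArg (coeff n) hfg
        rw [coeff_mul] at h0
        rw [h0, coeff_one, if_neg (Nat.pos_iff_ne_zero.mp hnpos)]
      have hmem : ((i₀, j₀) : ℕ × ℕ) ∈ Finset.HasAntidiagonal.antidiagonal n :=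
        Finset.HasAntidiagonal.mem_antidiagonal.mpr rfl
      -- dominant term = - (sum over the rest)
      have hdom : coeff i₀ f * coeff j₀ g =
          -∑ p ∈ (Finset.HasAntidiagonal.antidiagonal n).erase (i₀, j₀), coeff p.1 f * coeff p.2 g := by
        have h1 := Finset.add_sum_erase (Finset.HasAntidiagonal.antidiagonal n)
          (fun p : ℕ × ℕ => coeff p.1 f * coeff p.2 g) hmem
        rw [hc0] at h1
        exact eq_neg_of_add_eq_zero_left h1
      set D : ℝ := ‖coeff i₀ f‖ * ‖coeff j₀ g‖ with hD
      have hDpos : 0 < D := by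
        have : 0 < (A i₀) * (B j₀) := mul_pos hAi₀ hBj₀
        have hexp : A i₀ * B j₀ = D * γ ^ n := by
          simp only [hA, hB, hD, hn, pow_add]; ring
        nlinarith [pow_pos hγ0 n, this, hexp]
      -- every non-dominant term has strictly smaller norm
      have hterm : ∀ p ∈ (Finset.HasAntidiagonal.antidiagonal n).erase (i₀, j₀),
          ‖coeff p.1 f * coeff p.2 g‖ < D := by
        intro p hp
        have hpne : p ≠ (i₀, j₀) := Finset.ne_of_mem_erase hp
        have hpsum : p.1 + p.2 = n :=
          Finset.HasAntidiagonal.mem_antidiagonal.mp (Finset.mem_of_mem_erase hp)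
        have hAB : A p.1 * B p.2 < A i₀ * B j₀ := by
          rcases lt_trichotomy p.1 i₀ with h1 | h1 | h1
          · have hA1 : A p.1 < A i₀ := hi₀min p.1 h1
            have hB1 : B p.2 ≤ B j₀ := hj₀max p.2
            have hAnn : 0 ≤ A p.1 := by
              simp only [hA]; positivity
            calc A p.1 * B p.2 ≤ A p.1 * B j₀ := mul_le_mul_of_nonneg_left hB1 hAnn
              _ < A i₀ * B j₀ := mul_lt_mul_of_pos_right hA1 hBj₀
          · exfalso
            apply hpne
            have : p.2 = j₀ := by omega
            exact Prod.ext h1 this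
          · have h2 : p.2 < j₀ := by omega
            have hB1 : B p.2 < B j₀ := hj₀min p.2 h2
            have hA1 : A p.1 ≤ A i₀ := hi₀max p.1
            have hBnn : 0 ≤ B p.2 := by
              simp only [hB]; positivity
            calc A p.1 * B p.2 ≤ A i₀ * B p.2 := mul_le_mul_of_nonneg_right hA1 hBnn
              _ < A i₀ * B j₀ := mul_lt_mul_of_pos_left hB1 hAi₀
        have hexp1 : A p.1 * B p.2 = (‖coeff p.1 f‖ * ‖coeff p.2 g‖) * γ ^ n := by
          simp only [hA, hB, ← hpsum, pow_add]; ring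
        have hexp2 : A i₀ * B j₀ = D * γ ^ n := by
          simp only [hA, hB, hD, hn, pow_add]; ring
        rw [hexp1, hexp2] at hAB
        rw [norm_mul]
        exact lt_of_mul_lt_mul_right hAB (pow_pos hγ0 n).le
      -- the erased set is nonempty
      have hne' : ((Finset.HasAntidiagonal.antidiagonal n).erase (i₀, j₀)).Nonempty := by
        rw [← Finset.card_pos, Finset.card_erase_of_mem hmem, Finset.Nat.card_antidiagonal]
        omega
      -- bound the norm of the rest strictly below D
      have hrest : ‖∑ p ∈ (Finset.HasAntidiagonal.antidiagonal n).erase (i₀, j₀),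
          coeff p.1 f * coeff p.2 g‖ < D := by
        refine lt_of_le_of_lt (hne'.norm_sum_le_sup'_norm
          (fun p : ℕ × ℕ => coeff p.1 f * coeff p.2 g)) ?_
        rw [Finset.sup'_lt_iff]
        exact hterm
      have hDeq : D = ‖∑ p ∈ (Finset.HasAntidiagonal.antidiagonal n).erase (i₀, j₀),
          coeff p.1 f * coeff p.2 g‖ := by
        rw [hD, ← norm_mul, hdom, norm_neg]
      exact hrest.ne hDeq.symm
    -- conclude: A i ≤ A i₀ = A 0 = ‖a₀‖
    have : A i ≤ A 0 := hi₀0 ▸ hi₀max i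
    simpa [hA] using this
  -- pass to the limit γ → β⁻
  refine ⟨‖coeff 0 f‖, fun i => ?_⟩
  have hcont : Tendsto (fun γ : ℝ => ‖coeff i f‖ * γ ^ i) (nhdsWithin β (Set.Iio β))
      (nhds (‖coeff i f‖ * β ^ i)) := by
    exact ((continuous_const.mul (continuous_pow i)).tendsto β).mono_left nhdsWithin_le_nhds
  refine le_of_tendsto hcont ?_
  filter_upwards [Ioo_mem_nhdsLT_of_mem (Set.right_mem_Ioc.mpr hβ)] with γ hγ
  exact key γ hγ i
end

section
/- Let R be a differential ring satisfying Condition (S): every principal ideal I of R with d(I) \subseteq I equals (0) or (1). Then the constants R' = ker(d) form a subfield of R (assuming R is nonzero). -/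
/-- Let `R` be a (nonzero) differential ring satisfying Condition (S):
every principal ideal `I` with `d(I) ⊆ I` equals `(0)` or `(1)`. Then the constants
`R' = ker d` form a subfield of `R`: they form a subring, and every nonzero constant
has an inverse that is again a constant. -/
theorem stmt4 (R : Type*) [CommRing R] [Nontrivial R]
    (d : R →+ R) (hLeib : ∀ a b : R, d (a * b) = a * d b + b * d a)
    (hS : ∀ I : Ideal R, (∃ r : R, I = Ideal.span {r}) →
      (∀ x ∈ I, d x ∈ I) → I = ⊥ ∨ I = ⊤) :
    ∃ S : Subring R, (S : Set R) = {r : R | d r = 0} ∧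
      ∀ r ∈ S, r ≠ 0 → ∃ s ∈ S, r * s = 1 := by
  have hd1 : d 1 = 0 := by
    have h := hLeib 1 1
    rw [mul_one, one_mul] at h
    linear_combination -h
  refine ⟨{
    carrier := {r : R | d r = 0}
    mul_mem' := by
      intro a b ha hb
      simp only [Set.mem_setOf_eq] at *
      rw [hLeib, ha, hb]; ring
    one_mem' := hd1
    add_mem' := by
      intro a b ha hb
      simp only [Set.mem_setOf_eq] at *
      rw [map_add, ha, hb, add_zero]
    zero_mem' := map_zero d
    neg_mem' := by
      intro a ha
      simp only [Set.mem_setOf_eq] at *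
      rw [map_neg, ha, neg_zero] }, rfl, ?_⟩
  intro r hr hr0
  have hr' : d r = 0 := hr
  have hstab : ∀ x ∈ Ideal.span {r}, d x ∈ Ideal.span {r} := by
    intro x hx
    obtain ⟨c, rfl⟩ := Ideal.mem_span_singleton'.mp hx
    rw [hLeib, hr', mul_zero, zero_add]
    exact Ideal.mem_span_singleton'.mpr ⟨d c, by ring⟩
  rcases hS _ ⟨r, rfl⟩ hstab with h | h
  · exact absurd (by simpa using Ideal.span_eq_bot.mp h r rfl) hr0
  · have : (1 : R) ∈ Ideal.span {r} := h ▸ Submodule.mem_top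
    obtain ⟨s, hs⟩ := Ideal.mem_span_singleton'.mp this
    have hrs : r * s = 1 := by rw [mul_comm]; exact hs
    have hds : d s = 0 := by
      have h1 : r * d s = 0 := by
        have := hLeib r s
        rw [hrs, hd1, hr', mul_zero, add_zero] at this
        exact this.symm
      have := congrArg (s * ·) h1
      simp only [mul_zero] at this
      calc d s = s * r * d s := by rw [mul_comm s r, hrs, one_mul]
        _ = 0 := by rw [mul_assoc]; exact this
    exact ⟨s, hds, hrs⟩
end

section
/- Let R be a differential ring that is an elementary divisor domain satisfying Condition (S) (Property (P)). Then for any morphism \varphi: M \to N of finite free differential modules over R, the kernel and cokernel of \varphi are finite free R-modules. -/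
section Aux
variable {R : Type*} [CommRing R]

/-- Core computation: a linear map given in "diagonal" coordinates, commuting with
derivations, has free finite kernel and cokernel; the key point is that every
relevant diagonal entry is zero or a unit, via Condition (S). -/
private theorem stmt11_diag_main (d : R →+ R)
    (hS : ∀ r : R, d r ∈ Ideal.span ({r} : Set R) → r = 0 ∨ IsUnit r)
    {m n : ℕ} (dd : ℕ → R)
    (DM : (Fin n → R) →+ (Fin n → R))
    (hDM : ∀ (r : R) (x : Fin n → R), DM (r • x) = d r • x + r • DM x)
    (DN : (Fin m → R) →+ (Fin m → R))
    (hDN : ∀ (r : R) (x : Fin m → R), DN (r • x) = d r • x + r • DN x)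
    (ψ : (Fin n → R) →ₗ[R] (Fin m → R))
    (hψ : ∀ (x : Fin n → R) (i : Fin m),
      ψ x i = if h : (i : ℕ) < n then dd i * x ⟨i, h⟩ else 0)
    (hcomm : ∀ x, ψ (DM x) = DN (ψ x)) :
    (Module.Free R (LinearMap.ker ψ) ∧ Module.Finite R (LinearMap.ker ψ)) ∧
      (Module.Free R ((Fin m → R) ⧸ LinearMap.range ψ) ∧
        Module.Finite R ((Fin m → R) ⧸ LinearMap.range ψ)) := by
  classical
  -- Step 1: every relevant diagonal entry is zero or a unit
  have hdi : ∀ k : ℕ, k < m → k < n → dd k = 0 ∨ IsUnit (dd k) := by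
    intro k hkm hkn
    set i : Fin m := ⟨k, hkm⟩ with hi
    set j : Fin n := ⟨k, hkn⟩ with hj
    set f : Fin m → R := Pi.single i 1 with hf
    set e : Fin n → R := Pi.single j 1 with he
    have hψe : ψ e = dd k • f := by
      funext i'
      rw [hψ]
      by_cases hc : i' = i
      · subst hc
        rw [dif_pos hkn]
        simp [he, hf, hj, Pi.single_eq_same]
        show dd k * (Pi.single (⟨k, hkn⟩ : Fin n) (1:R) : Fin n → R) ⟨k, hkn⟩ = dd k
        rw [Pi.single_eq_same, mul_one]
      · have : (dd k • f) i' = 0 := by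
          simp [hf, Pi.single_eq_of_ne hc]
        rw [this]
        split_ifs with h'
        · have : (⟨(i' : ℕ), h'⟩ : Fin n) ≠ j := by
            intro hcon
            apply hc
            apply Fin.ext
            simpa [hj] using congrArg Fin.val hcon
          simp [he, Pi.single_eq_of_ne this]
        · rfl
    have hmem : DN (dd k • f) ∈ LinearMap.range ψ := by
      rw [← hψe, ← hcomm]
      exact ⟨DM e, rfl⟩
    obtain ⟨x, hx⟩ := hmem
    have hx' := congrFun hx i
    rw [hψ] at hx'
    rw [dif_pos hkn] at hx'
    have hDNf := congrFun (hDN (dd k) f) i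
    have hfi : f i = 1 := Pi.single_eq_same i 1
    apply hS
    rw [Ideal.mem_span_singleton]
    have : dd k * x ⟨k, hkn⟩ = d (dd k) * 1 + dd k * DN f i := by
      rw [← hfi]
      calc dd k * x ⟨(i : ℕ), hkn⟩ = DN (dd k • f) i := hx'
        _ = d (dd k) • f i + dd k • DN f i := hDNf
        _ = d (dd k) * f i + dd k * DN f i := rfl
    refine ⟨x ⟨k, hkn⟩ - DN f i, ?_⟩
    linear_combination -this
  -- Step 2: the kernel
  have hker : Module.Free R (LinearMap.ker ψ) ∧ Module.Finite R (LinearMap.ker ψ) := by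
    set P : Fin n → Prop := fun j => (j : ℕ) < m ∧ dd (j : ℕ) ≠ 0 with hP
    set F : LinearMap.ker ψ →ₗ[R] ({j : Fin n // ¬ P j} → R) :=
      (LinearMap.funLeft R R Subtype.val).comp (LinearMap.ker ψ).subtype with hF
    have hinj : Function.Injective F := by
      intro ⟨x, hxk⟩ ⟨x', hxk'⟩ hxx'
      apply Subtype.ext
      funext j
      show x j = x' j
      by_cases hPj : P j
      · obtain ⟨hjm, hne⟩ := hPj
        have hu : IsUnit (dd (j : ℕ)) := (hdi j hjm j.isLt).resolve_left hne
        have hz : ∀ z : Fin n → R, z ∈ LinearMap.ker ψ → z j = 0 := by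
          intro z hz
          have := congrFun (LinearMap.mem_ker.mp hz) ⟨(j : ℕ), hjm⟩
          rw [hψ] at this
          rw [dif_pos j.isLt] at this
          have hjj : (⟨(j : ℕ), j.isLt⟩ : Fin n) = j := Fin.ext rfl
          rw [hjj] at this
          exact (hu.mul_right_eq_zero).mp this
        rw [hz x hxk, hz x' hxk']
      · exact congrFun hxx' ⟨j, hPj⟩
    have hsurj : Function.Surjective F := by
      intro y
      set x : Fin n → R := fun j => if h : P j then 0 else y ⟨j, h⟩ with hx
      have hxk : x ∈ LinearMap.ker ψ := by
        rw [LinearMap.mem_ker]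
        funext i
        rw [hψ]
        split_ifs with h
        · by_cases hz : dd (i : ℕ) = 0
          · rw [hz, zero_mul]; rfl
          · have : P ⟨(i : ℕ), h⟩ := ⟨i.isLt, hz⟩
            simp only [hx, dif_pos this, mul_zero]; rfl
        · rfl
      refine ⟨⟨x, hxk⟩, ?_⟩
      funext ⟨j, hj⟩
      simp only [hF, LinearMap.comp_apply, LinearMap.funLeft_apply, Submodule.subtype_apply]
      simp only [hx, dif_neg hj]
    exact ⟨Module.Free.of_equiv (LinearEquiv.ofBijective F ⟨hinj, hsurj⟩).symm,
      Module.Finite.equiv (LinearEquiv.ofBijective F ⟨hinj, hsurj⟩).symm⟩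
  -- Step 3: the cokernel
  have hcok : Module.Free R ((Fin m → R) ⧸ LinearMap.range ψ) ∧
      Module.Finite R ((Fin m → R) ⧸ LinearMap.range ψ) := by
    set Q : Fin m → Prop := fun i => (i : ℕ) < n ∧ dd (i : ℕ) ≠ 0 with hQ
    set q : (Fin m → R) →ₗ[R] ({i : Fin m // ¬ Q i} → R) :=
      LinearMap.funLeft R R Subtype.val with hq
    have hqsurj : Function.Surjective q := by
      intro z
      refine ⟨fun i => if h : Q i then 0 else z ⟨i, h⟩, ?_⟩
      funext ⟨i, hi⟩
      simp only [hq, LinearMap.funLeft_apply, dif_neg hi]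
    have hrange : LinearMap.range ψ = LinearMap.ker q := by
      apply le_antisymm
      · rintro _ ⟨x, rfl⟩
        rw [LinearMap.mem_ker]
        funext ⟨i, hi⟩
        simp only [hq, LinearMap.funLeft_apply, Pi.zero_apply]
        rw [hψ]
        split_ifs with h
        · have : dd (i : ℕ) = 0 := by
            by_contra hne
            exact hi ⟨h, hne⟩
          rw [this, zero_mul]
        · rfl
      · intro y hy
        have hy' : ∀ i : Fin m, ¬ Q i → y i = 0 := fun i hi =>
          congrFun (LinearMap.mem_ker.mp hy) ⟨i, hi⟩
        refine ⟨fun j => if h : (j : ℕ) < m ∧ dd (j : ℕ) ≠ 0 then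
          (((hdi j h.1 j.isLt).resolve_left h.2).unit⁻¹ : Rˣ) * y ⟨(j : ℕ), h.1⟩ else 0, ?_⟩
        funext i
        rw [hψ]
        by_cases h : (i : ℕ) < n
        · rw [dif_pos h]
          by_cases hz : dd (i : ℕ) = 0
          · have hnc : ¬(((⟨(i : ℕ), h⟩ : Fin n) : ℕ) < m ∧
                dd ((⟨(i : ℕ), h⟩ : Fin n) : ℕ) ≠ 0) := by
              rintro ⟨-, hne⟩; exact hne hz
            simp only [dif_neg hnc, mul_zero]
            exact (hy' i (fun hQi => hQi.2 hz)).symm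
          · have hu : IsUnit (dd (i : ℕ)) := (hdi i i.isLt h).resolve_left hz
            have hcond : ((⟨(i : ℕ), h⟩ : Fin n) : ℕ) < m ∧
                dd ((⟨(i : ℕ), h⟩ : Fin n) : ℕ) ≠ 0 := ⟨i.isLt, hz⟩
            simp only [dif_pos hcond]
            show dd (i : ℕ) * ((hu.unit⁻¹ : Rˣ) * y i) = y i
            rw [← mul_assoc, IsUnit.mul_val_inv hu, one_mul]
        · rw [dif_neg h]
          exact (hy' i (fun hQi => absurd hQi.1 h)).symm
    have e : ((Fin m → R) ⧸ LinearMap.range ψ) ≃ₗ[R] ({i : Fin m // ¬ Q i} → R) :=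
      (Submodule.quotEquivOfEq _ _ hrange).trans (q.quotKerEquivOfSurjective hqsurj)
    exact ⟨Module.Free.of_equiv e.symm, Module.Finite.equiv e.symm⟩
  exact ⟨hker, hcok⟩

end Aux


/-- An elementary divisor ring: every rectangular matrix admits a Smith normal
form via invertible row and column operations, with diagonal entries forming a
divisibility chain. -/
def IsElementaryDivisorRing (R : Type*) [CommRing R] : Prop :=
  ∀ (m n : ℕ) (A : Matrix (Fin m) (Fin n) R),
    ∃ (U : Matrix (Fin m) (Fin m) R) (V : Matrix (Fin n) (Fin n) R) (dd : ℕ → R),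
      IsUnit U.det ∧ IsUnit V.det ∧ (∀ k : ℕ, dd k ∣ dd (k + 1)) ∧
      U * A * V = Matrix.of fun (i : Fin m) (j : Fin n) => if (i : ℕ) = (j : ℕ) then dd (i : ℕ) else 0

/-- Let `R` be a differential ring with Property (P): `R` is an
elementary divisor domain satisfying Condition (S). Then for any morphism
`φ : M → N` of finite free differential modules over `R`, the kernel and cokernel
of `φ` are finite free `R`-modules. -/
theorem stmt11 (R : Type*) [CommRing R] [IsDomain R]
    (d : R →+ R) (hLeib : ∀ a b : R, d (a * b) = a * d b + b * d a)
    (hEDD : IsElementaryDivisorRing R)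
    (hS : ∀ r : R, d r ∈ Ideal.span ({r} : Set R) → r = 0 ∨ IsUnit r)
    (M N : Type*) [AddCommGroup M] [Module R M] [AddCommGroup N] [Module R N]
    [Module.Free R M] [Module.Finite R M] [Module.Free R N] [Module.Finite R N]
    (DM : M →+ M) (hDM : ∀ (r : R) (x : M), DM (r • x) = d r • x + r • DM x)
    (DN : N →+ N) (hDN : ∀ (r : R) (x : N), DN (r • x) = d r • x + r • DN x)
    (φ : M →ₗ[R] N) (hφ : ∀ x : M, φ (DM x) = DN (φ x)) :
    (Module.Free R (LinearMap.ker φ) ∧ Module.Finite R (LinearMap.ker φ)) ∧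
      (Module.Free R (N ⧸ LinearMap.range φ) ∧
        Module.Finite R (N ⧸ LinearMap.range φ)) := by
  classical
  set n := Fintype.card (Module.Free.ChooseBasisIndex R M) with hn
  set m := Fintype.card (Module.Free.ChooseBasisIndex R N) with hm
  let bM : Module.Basis (Fin n) R M := (Module.Free.chooseBasis R M).reindex (Fintype.equivFin _)
  let bN : Module.Basis (Fin m) R N := (Module.Free.chooseBasis R N).reindex (Fintype.equivFin _)
  set A : Matrix (Fin m) (Fin n) R := LinearMap.toMatrix bM bN φ with hA
  obtain ⟨U, V, dd, hU, hV, hchain, hSNF⟩ := hEDD m n A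
  let uEq : (Fin m → R) ≃ₗ[R] (Fin m → R) := Matrix.toLinearEquiv' U (U.invertibleOfIsUnitDet hU)
  let vEq : (Fin n → R) ≃ₗ[R] (Fin n → R) := Matrix.toLinearEquiv' V (V.invertibleOfIsUnitDet hV)
  let EM : M ≃ₗ[R] (Fin n → R) := bM.equivFun.trans vEq.symm
  let EN : N ≃ₗ[R] (Fin m → R) := bN.equivFun.trans uEq
  set ψ : (Fin n → R) →ₗ[R] (Fin m → R) :=
    (EN : N →ₗ[R] (Fin m → R)) ∘ₗ φ ∘ₗ (EM.symm : (Fin n → R) →ₗ[R] M) with hψdef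
  -- ψ agrees with mulVec by U*A*V
  have hψmat : ∀ x : Fin n → R, ψ x = (U * A * V).mulVec x := by
    intro x
    have h1 : EM.symm x = bM.equivFun.symm (vEq x) := rfl
    have h2 : ∀ y : N, EN y = uEq (bN.equivFun y) := fun y => rfl
    have h3 : vEq x = V.mulVec x := rfl
    have h4 : ∀ z, uEq z = U.mulVec z := fun z => rfl
    have h5 : bN.equivFun (φ (bM.equivFun.symm (V.mulVec x))) = A.mulVec (V.mulVec x) := by
      have := LinearMap.toMatrix_mulVec_repr bM bN φ (bM.equivFun.symm (V.mulVec x))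
      rw [← hA] at this
      funext i
      rw [Module.Basis.equivFun_apply, ← this]
      congr 1
      funext j
      rw [← Module.Basis.equivFun_apply, LinearEquiv.apply_symm_apply]
    show EN (φ (EM.symm x)) = _
    rw [h1, h2, h3, h5, h4, Matrix.mulVec_mulVec, Matrix.mulVec_mulVec]
  have hψ : ∀ (x : Fin n → R) (i : Fin m),
      ψ x i = if h : (i : ℕ) < n then dd i * x ⟨i, h⟩ else 0 := by
    intro x i
    rw [hψmat, hSNF]
    show (∑ j : Fin n, (if (i : ℕ) = (j : ℕ) then dd (i : ℕ) else 0) * x j) = _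
    split_ifs with h
    · rw [Finset.sum_eq_single (⟨(i : ℕ), h⟩ : Fin n)]
      · rw [if_pos rfl]
      · intro j _ hj
        rw [if_neg, zero_mul]
        intro hc
        exact hj (Fin.ext hc.symm)
      · intro hc
        exact absurd (Finset.mem_univ _) hc
    · apply Finset.sum_eq_zero
      intro j _
      rw [if_neg, zero_mul]
      intro hc
      exact h (hc ▸ j.isLt)
  -- transported derivations
  set DM' : (Fin n → R) →+ (Fin n → R) :=
    ((EM : M →ₗ[R] (Fin n → R)).toAddMonoidHom.comp DM).comp
      (EM.symm : (Fin n → R) →ₗ[R] M).toAddMonoidHom with hDM'def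
  set DN' : (Fin m → R) →+ (Fin m → R) :=
    ((EN : N →ₗ[R] (Fin m → R)).toAddMonoidHom.comp DN).comp
      (EN.symm : (Fin m → R) →ₗ[R] N).toAddMonoidHom with hDN'def
  have hDM'app : ∀ x, DM' x = EM (DM (EM.symm x)) := fun x => rfl
  have hDN'app : ∀ x, DN' x = EN (DN (EN.symm x)) := fun x => rfl
  have hDM' : ∀ (r : R) (x : Fin n → R), DM' (r • x) = d r • x + r • DM' x := by
    intro r x
    rw [hDM'app, hDM'app, map_smul, hDM, map_add, map_smul, map_smul,
      LinearEquiv.apply_symm_apply]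
  have hDN' : ∀ (r : R) (x : Fin m → R), DN' (r • x) = d r • x + r • DN' x := by
    intro r x
    rw [hDN'app, hDN'app, map_smul, hDN, map_add, map_smul, map_smul,
      LinearEquiv.apply_symm_apply]
  have hcomm : ∀ x, ψ (DM' x) = DN' (ψ x) := by
    intro x
    rw [hDM'app, hDN'app]
    show EN (φ (EM.symm (EM (DM (EM.symm x))))) = EN (DN (EN.symm (EN (φ (EM.symm x)))))
    rw [LinearEquiv.symm_apply_apply, LinearEquiv.symm_apply_apply, hφ]
  -- kernel equivalence
  have hkereq : Submodule.map (EM : M →ₗ[R] (Fin n → R)) (LinearMap.ker φ) = LinearMap.ker ψ := by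
    ext x
    rw [show (EM : M →ₗ[R] (Fin n → R)) = ((EM : M ≃ₗ[R] (Fin n → R)) : M →ₗ[R] _) from rfl]
    rw [Submodule.mem_map_equiv, LinearMap.mem_ker, LinearMap.mem_ker]
    show φ (EM.symm x) = 0 ↔ EN (φ (EM.symm x)) = 0
    constructor
    · intro h; rw [h, map_zero]
    · intro h
      have := congrArg EN.symm h
      rwa [LinearEquiv.symm_apply_apply, map_zero] at this
  have eK : (LinearMap.ker φ) ≃ₗ[R] (LinearMap.ker ψ) :=
    (EM.submoduleMap (LinearMap.ker φ)).trans (LinearEquiv.ofEq _ _ hkereq)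
  -- range equality and cokernel equivalence
  have hrgeq : Submodule.map (EN : N →ₗ[R] (Fin m → R)) (LinearMap.range φ) = LinearMap.range ψ := by
    ext y
    rw [show (EN : N →ₗ[R] (Fin m → R)) = ((EN : N ≃ₗ[R] (Fin m → R)) : N →ₗ[R] _) from rfl]
    rw [Submodule.mem_map_equiv, LinearMap.mem_range, LinearMap.mem_range]
    constructor
    · rintro ⟨x, hx⟩
      refine ⟨EM x, ?_⟩
      show EN (φ (EM.symm (EM x))) = y
      rw [LinearEquiv.symm_apply_apply, hx, LinearEquiv.apply_symm_apply]
    · rintro ⟨x, hx⟩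
      refine ⟨EM.symm x, ?_⟩
      have : EN (φ (EM.symm x)) = y := hx
      rw [← this, LinearEquiv.symm_apply_apply]
  have eC : (N ⧸ LinearMap.range φ) ≃ₗ[R] ((Fin m → R) ⧸ LinearMap.range ψ) :=
    Submodule.Quotient.equiv _ _ EN hrgeq
  obtain ⟨⟨hkF, hkFin⟩, hcF, hcFin⟩ :=
    stmt11_diag_main d hS dd DM' hDM' DN' hDN' ψ hψ hcomm
  exact ⟨⟨Module.Free.of_equiv eK.symm, Module.Finite.equiv eK.symm⟩,
    ⟨Module.Free.of_equiv eC.symm, Module.Finite.equiv eC.symm⟩⟩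
end

section
/- Let R be a differential ring with Property (P) and \varphi: M \to N an injective morphism of finite free differential modules over R with rank M = rank N. Then \varphi is an isomorphism. -/
open Matrix in
/-- Let `R` be a differential ring with Property (P) (elementary
divisor domain satisfying Condition (S)) and `φ : M → N` an injective morphism of
finite free differential modules over `R` with `rank M = rank N`. Then `φ` is an
isomorphism. -/
theorem stmt12 (R : Type*) [CommRing R] [IsDomain R]
    (d : R →+ R) (hLeib : ∀ a b : R, d (a * b) = a * d b + b * d a)
    (hEDD : IsElementaryDivisorRing R)
    (hS : ∀ r : R, d r ∈ Ideal.span ({r} : Set R) → r = 0 ∨ IsUnit r)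
    (M N : Type*) [AddCommGroup M] [Module R M] [AddCommGroup N] [Module R N]
    [Module.Free R M] [Module.Finite R M] [Module.Free R N] [Module.Finite R N]
    (DM : M →+ M) (hDM : ∀ (r : R) (x : M), DM (r • x) = d r • x + r • DM x)
    (DN : N →+ N) (hDN : ∀ (r : R) (x : N), DN (r • x) = d r • x + r • DN x)
    (φ : M →ₗ[R] N) (hφ : ∀ x : M, φ (DM x) = DN (φ x))
    (hinj : Function.Injective φ)
    (hrank : Module.finrank R M = Module.finrank R N) :
    Function.Bijective φ := by
  refine ⟨hinj, ?_⟩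
  set n := Module.finrank R M with hn
  let bM : Module.Basis (Fin n) R M := Module.finBasis R M
  let bN : Module.Basis (Fin n) R N := (Module.finBasis R N).reindex (finCongr hrank.symm)
  rcases Nat.eq_zero_or_pos n with h0 | hpos
  · -- trivial case: rank zero
    haveI : IsEmpty (Fin n) := ⟨fun i => absurd i.2 (by omega)⟩
    intro y
    refine ⟨0, ?_⟩
    have hy0 : bN.equivFun y = 0 := funext fun i => isEmptyElim i
    have : y = bN.equivFun.symm (bN.equivFun y) := (bN.equivFun.symm_apply_apply y).symm
    rw [this, hy0, map_zero, map_zero]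
  · let A := LinearMap.toMatrix bM bN φ
    obtain ⟨U, V, dd, hU, hV, hchain, hUAV⟩ := hEDD n n A
    set Dm : Matrix (Fin n) (Fin n) R := Matrix.diagonal (fun i : Fin n => dd (i : ℕ)) with hDm
    have hdiag : U * A * V = Dm := by
      rw [hUAV, hDm]
      ext i j
      by_cases h : i = j
      · subst h; simp
      · have h' : (i : ℕ) ≠ (j : ℕ) := fun hc => h (Fin.ext hc)
        simp [Matrix.diagonal_apply_ne _ h, h']
    have hAV : A * V = U⁻¹ * Dm := by
      rw [← hdiag, ← Matrix.mul_assoc, ← Matrix.mul_assoc, Matrix.nonsing_inv_mul U hU,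
        Matrix.one_mul]
    have hUA : Dm * V⁻¹ = U * A := by
      rw [← hdiag, Matrix.mul_assoc, Matrix.mul_nonsing_inv V hV, Matrix.mul_one]
    -- the image of φ(toMatrix-equivFun): key lemma
    have hrepr : ∀ x : M, A *ᵥ (bM.equivFun x) = bN.equivFun (φ x) := fun x => by
      have := LinearMap.toMatrix_mulVec_repr bM bN φ x
      simpa [Module.Basis.equivFun_apply] using this
    have hmem : ∀ y : N,
        y ∈ LinearMap.range φ ↔ ∀ i : Fin n, dd (i : ℕ) ∣ (U *ᵥ (bN.equivFun y)) i := by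
      intro y
      constructor
      · rintro ⟨x, rfl⟩ i
        have h2 : U *ᵥ (bN.equivFun (φ x)) = Dm *ᵥ (V⁻¹ *ᵥ (bM.equivFun x)) := by
          rw [← hrepr x, Matrix.mulVec_mulVec, Matrix.mulVec_mulVec, ← hUA]
        rw [h2, hDm, Matrix.mulVec_diagonal]
        exact Dvd.intro _ rfl
      · intro hdv
        choose c' hc' using hdv
        refine ⟨bM.equivFun.symm (V *ᵥ c'), ?_⟩
        apply bN.equivFun.injective
        rw [← hrepr, LinearEquiv.apply_symm_apply, Matrix.mulVec_mulVec, hAV,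
          ← Matrix.mulVec_mulVec]
        have hDc : Dm *ᵥ c' = U *ᵥ (bN.equivFun y) := by
          funext i
          rw [hDm, Matrix.mulVec_diagonal]
          exact (hc' i).symm
        rw [hDc, Matrix.mulVec_mulVec, Matrix.nonsing_inv_mul U hU, Matrix.one_mulVec]
    have hdvd : ∀ a b : ℕ, a ≤ b → dd a ∣ dd b := by
      intro a b hab
      induction b, hab using Nat.le_induction with
      | base => exact dvd_rfl
      | succ b _ ih => exact ih.trans (hchain b)
    let last : Fin n := ⟨n - 1, by omega⟩
    set δ : R := dd (n - 1) with hδ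
    have hδdvd : ∀ i : Fin n, dd (i : ℕ) ∣ δ := fun i => hdvd _ _ (by omega)
    -- Claim A : δ • y ∈ range φ for all y
    have claimA : ∀ y : N, δ • y ∈ LinearMap.range φ := by
      intro y
      rw [hmem]
      intro i
      have h1 : U *ᵥ (bN.equivFun (δ • y)) = δ • (U *ᵥ (bN.equivFun y)) := by
        rw [_root_.map_smul, Matrix.mulVec_smul]
      rw [h1]
      exact (hδdvd i).mul_right _
    -- Claim B : anything that scales all of N into range φ is divisible by δ
    have claimB : ∀ r : R, (∀ y : N, r • y ∈ LinearMap.range φ) → δ ∣ r := by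
      intro r hr
      have hy := (hmem _).mp (hr (bN.equivFun.symm (U⁻¹ *ᵥ (Pi.single last 1 : Fin n → R)))) last
      have h1 : U *ᵥ (bN.equivFun (r • bN.equivFun.symm (U⁻¹ *ᵥ (Pi.single last 1 : Fin n → R))))
          = r • (Pi.single last 1 : Fin n → R) := by
        rw [_root_.map_smul, LinearEquiv.apply_symm_apply, Matrix.mulVec_smul, Matrix.mulVec_mulVec,
          Matrix.mul_nonsing_inv U hU, Matrix.one_mulVec]
      rw [h1] at hy
      simpa [last, Pi.single_apply] using hy
    -- Claim C : d δ also scales N into range φ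
    have claimC : ∀ y : N, d δ • y ∈ LinearMap.range φ := by
      intro y
      obtain ⟨x, hx⟩ := claimA y
      have h2 : DN (δ • y) = φ (DM x) := by rw [← hx, ← hφ]
      have h3 : d δ • y = φ (DM x) - δ • DN y := by
        rw [← h2, hDN δ y, add_sub_cancel_right]
      rw [h3]
      exact Submodule.sub_mem _ ⟨DM x, rfl⟩ (claimA (DN y))
    have hδS : d δ ∈ Ideal.span ({δ} : Set R) :=
      Ideal.mem_span_singleton.mpr (claimB _ claimC)
    -- δ ≠ 0 by injectivity
    have hδ0 : δ ≠ 0 := by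
      intro h0'
      have hD0 : Dm *ᵥ (Pi.single last 1 : Fin n → R) = 0 := by
        rw [hDm, Matrix.diagonal_mulVec_single]
        have : dd (last : ℕ) = 0 := h0' ▸ rfl
        rw [this, zero_mul, Pi.single_zero]
      set x0 : M := bM.equivFun.symm (V *ᵥ (Pi.single last 1 : Fin n → R)) with hx0
      have hφx0 : φ x0 = 0 := by
        apply bN.equivFun.injective
        rw [← hrepr, hx0, LinearEquiv.apply_symm_apply, Matrix.mulVec_mulVec, hAV,
          ← Matrix.mulVec_mulVec, hD0, Matrix.mulVec_zero, map_zero]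
      have hx00 : x0 = 0 := hinj (by rw [hφx0, map_zero])
      have hV0 : V *ᵥ (Pi.single last 1 : Fin n → R) = 0 := by
        have := congrArg bM.equivFun hx00
        rwa [hx0, LinearEquiv.apply_symm_apply, map_zero] at this
      have : (Pi.single last 1 : Fin n → R) = 0 := by
        have h : V⁻¹ *ᵥ (V *ᵥ (Pi.single last 1 : Fin n → R)) = V⁻¹ *ᵥ 0 := by rw [hV0]
        rwa [Matrix.mulVec_mulVec, Matrix.nonsing_inv_mul V hV, Matrix.one_mulVec,
          Matrix.mulVec_zero] at h
      have h1 := congrFun this last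
      simp at h1
    rcases hS δ hδS with h | hu
    · exact absurd h hδ0
    · -- δ is a unit, so φ is surjective
      intro y
      obtain ⟨v, hv⟩ := hu.exists_left_inv
      obtain ⟨x, hx⟩ := claimA y
      refine ⟨v • x, ?_⟩
      rw [_root_.map_smul, hx, smul_smul, hv, one_smul]
end

section
/- Let R be a differential ring with Property (P) and \varphi: M \to N an injective morphism of finite free differential modules over R. Then the induced morphism \wedge^n \varphi : \wedge^n M \to \wedge^n N on n-th exterior powers is injective for every n. -/
open Matrix in
/-- Auxiliary splitting lemma: under the hypotheses of Statement 13, the injective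
morphism `φ` of differential modules admits a genuine `R`-linear left inverse. -/
theorem stmt13_aux {R : Type*} [CommRing R] [IsDomain R]
    (d : R →+ R)
    (hEDD : IsElementaryDivisorRing R)
    (hS : ∀ r : R, d r ∈ Ideal.span ({r} : Set R) → r = 0 ∨ IsUnit r)
    {M N : Type*} [AddCommGroup M] [Module R M] [AddCommGroup N] [Module R N]
    [Module.Free R M] [Module.Finite R M] [Module.Free R N] [Module.Finite R N]
    (DM : M →+ M) (hDM : ∀ (r : R) (x : M), DM (r • x) = d r • x + r • DM x)
    (DN : N →+ N) (hDN : ∀ (r : R) (x : N), DN (r • x) = d r • x + r • DN x)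
    (φ : M →ₗ[R] N) (hφ : ∀ x : M, φ (DM x) = DN (φ x))
    (hinj : Function.Injective φ) :
    ∃ ψ : N →ₗ[R] M, ψ ∘ₗ φ = LinearMap.id := by
  classical
  set m := Module.finrank R M with hm
  set n := Module.finrank R N with hn
  let bM : Module.Basis (Fin m) R M := Module.finBasis R M
  let bN : Module.Basis (Fin n) R N := Module.finBasis R N
  set A : Matrix (Fin n) (Fin m) R := LinearMap.toMatrix bM bN φ with hA
  obtain ⟨U, V, dd, hU, hV, hchain, hSNF⟩ := hEDD n m A
  set Dm : Matrix (Fin n) (Fin m) R :=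
    Matrix.of (fun (i : Fin n) (j : Fin m) =>
      if (i : ℕ) = (j : ℕ) then dd (i : ℕ) else 0) with hDm
  have hUU : U⁻¹ * U = 1 := Matrix.nonsing_inv_mul U hU
  have hUU' : U * U⁻¹ = 1 := Matrix.mul_nonsing_inv U hU
  have hVV : V⁻¹ * V = 1 := Matrix.nonsing_inv_mul V hV
  have hVV' : V * V⁻¹ = 1 := Matrix.mul_nonsing_inv V hV
  -- coordinates of φ
  have hcoord : ∀ x : M, bN.equivFun (φ x) = A *ᵥ (bM.equivFun x) := by
    intro x
    rw [Module.Basis.equivFun_apply, Module.Basis.equivFun_apply, hA,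
      LinearMap.toMatrix_mulVec_repr]
  -- A is injective on vectors
  have hA0 : ∀ v : Fin m → R, A *ᵥ v = 0 → v = 0 := by
    intro v hv
    set x : M := bM.equivFun.symm v with hx
    have h1 : bN.equivFun (φ x) = 0 := by
      rw [hcoord, hx, LinearEquiv.apply_symm_apply, hv]
    have h2 : φ x = 0 := by
      apply bN.equivFun.injective
      rw [h1, map_zero]
    have h3 : x = 0 := hinj (by rw [h2, map_zero])
    have h4 : v = bM.equivFun x := (bM.equivFun.apply_symm_apply v).symm
    rw [h4, h3, map_zero]
  -- cancellation for invertible square matrices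
  have hcancel : ∀ {k : ℕ} (W : Matrix (Fin k) (Fin k) R), IsUnit W.det →
      ∀ v : Fin k → R, W *ᵥ v = 0 → v = 0 := by
    intro k W hW v hv
    have : W⁻¹ *ᵥ (W *ᵥ v) = v := by
      rw [Matrix.mulVec_mulVec, Matrix.nonsing_inv_mul W hW, Matrix.one_mulVec]
    rw [hv, Matrix.mulVec_zero] at this
    exact this.symm
  -- D kills no standard basis vector
  have hD0 : ∀ v : Fin m → R, Dm *ᵥ v = 0 → v = 0 := by
    intro v hv
    rw [← hSNF] at hv
    have h1 : U *ᵥ (A *ᵥ (V *ᵥ v)) = 0 := by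
      rw [Matrix.mulVec_mulVec, Matrix.mulVec_mulVec]; exact hv
    have h2 : A *ᵥ (V *ᵥ v) = 0 := hcancel U hU _ h1
    have h3 : V *ᵥ v = 0 := hA0 _ h2
    exact hcancel V hV _ h3
  have hsingle_ne : ∀ (j : Fin m), (Pi.single j 1 : Fin m → R) ≠ 0 := by
    intro j h
    have := congrFun h j
    simp at this
  -- m ≤ n
  have hmn : m ≤ n := by
    by_contra h
    push_neg at h
    set j : Fin m := ⟨n, h⟩ with hj
    have : Dm *ᵥ (Pi.single j 1) = 0 := by
      rw [Matrix.mulVec_single]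
      funext i
      have : (i : ℕ) ≠ (j : ℕ) := by
        rw [hj]; exact Nat.ne_of_lt i.isLt
      simp [hDm, this]
    exact hsingle_ne j (hD0 _ this)
  -- dd j ≠ 0
  have hdd0 : ∀ j : Fin m, dd (j : ℕ) ≠ 0 := by
    intro j hzero
    have : Dm *ᵥ (Pi.single j 1) = 0 := by
      rw [Matrix.mulVec_single]
      funext i
      by_cases hij : (i : ℕ) = (j : ℕ)
      · simp [hDm, hij, hzero]
      · simp [hDm, hij]
    exact hsingle_ne j (hD0 _ this)
  -- every dd j is a unit
  have hunit : ∀ j : Fin m, IsUnit (dd (j : ℕ)) := by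
    intro j
    set j' : Fin n := Fin.castLE hmn j with hj'
    have hj'j : (j' : ℕ) = (j : ℕ) := rfl
    -- the coordinate functional
    set c : N →ₗ[R] R :=
      LinearMap.proj j' ∘ₗ U.mulVecLin ∘ₗ bN.equivFun.toLinearMap with hc
    have hcapp : ∀ y : N, c y = (U *ᵥ (bN.equivFun y)) j' := fun y => rfl
    -- range of φ has j'-coordinate divisible by dd j
    have hrange : ∀ x : M, c (φ x) ∈ Ideal.span ({dd (j : ℕ)} : Set R) := by
      intro x
      rw [hcapp, hcoord, Matrix.mulVec_mulVec]
      have hUA : U * A = Dm * V⁻¹ := by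
        calc U * A = U * A * (V * V⁻¹) := by rw [hVV', Matrix.mul_one]
        _ = (U * A * V) * V⁻¹ := by rw [Matrix.mul_assoc (U * A) V V⁻¹]
        _ = Dm * V⁻¹ := by rw [hSNF]
      rw [hUA, ← Matrix.mulVec_mulVec]
      set w := V⁻¹ *ᵥ (bM.equivFun x) with hw
      have : (Dm *ᵥ w) j' = dd (j : ℕ) * w j := by
        simp only [Matrix.mulVec, dotProduct]
        rw [Finset.sum_eq_single j]
        · simp [hDm, hj'j]
        · intro k _ hk
          have : (j' : ℕ) ≠ (k : ℕ) := by
            rw [hj'j]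
            exact fun hkk => hk (Fin.ext hkk.symm)
          simp [hDm, this]
        · intro hj; exact absurd (Finset.mem_univ j) hj
      rw [this]
      exact Ideal.mem_span_singleton.mpr (dvd_mul_right _ _)
    -- the adapted basis vectors
    set u : M := bM.equivFun.symm (V *ᵥ (Pi.single j 1)) with hu
    set w : N := bN.equivFun.symm (U⁻¹ *ᵥ (Pi.single j' 1)) with hwdef
    have hφu : φ u = dd (j : ℕ) • w := by
      apply bN.equivFun.injective
      rw [hcoord, hu, LinearEquiv.apply_symm_apply, _root_.map_smul, hwdef,
        LinearEquiv.apply_symm_apply, Matrix.mulVec_mulVec]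
      have hAV : A * V = U⁻¹ * Dm := by
        calc A * V = (U⁻¹ * U) * A * V := by rw [hUU, Matrix.one_mul]
        _ = U⁻¹ * (U * A * V) := by simp only [Matrix.mul_assoc]
        _ = U⁻¹ * Dm := by rw [hSNF]
      rw [hAV, ← Matrix.mulVec_mulVec]
      have hDms : Dm *ᵥ (Pi.single j 1) = dd (j : ℕ) • (Pi.single j' 1 : Fin n → R) := by
        rw [Matrix.mulVec_single]
        funext i
        by_cases hij : (i : ℕ) = (j : ℕ)
        · have : i = j' := Fin.ext (by rw [hij, hj'j])
          simp [hDm, hij, this, Pi.single_apply, hj'j]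
        · have : i ≠ j' := fun h => hij (by rw [h, hj'j])
          simp [hDm, hij, Pi.single_apply, this]
      rw [hDms, Matrix.mulVec_smul]
    have hcw : c w = 1 := by
      rw [hcapp, hwdef, LinearEquiv.apply_symm_apply, Matrix.mulVec_mulVec, hUU',
        Matrix.one_mulVec]
      simp
    -- the key divisibility
    have hkey : d (dd (j : ℕ)) ∈ Ideal.span ({dd (j : ℕ)} : Set R) := by
      have h1 : c (DN (φ u)) ∈ Ideal.span ({dd (j : ℕ)} : Set R) := by
        rw [← hφ u]; exact hrange (DM u)
      have h2 : DN (φ u) = d (dd (j : ℕ)) • w + dd (j : ℕ) • DN w := by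
        rw [hφu]; exact hDN _ _
      rw [h2, map_add, _root_.map_smul, _root_.map_smul, hcw, smul_eq_mul, mul_one] at h1
      have h3 : dd (j : ℕ) • c (DN w) ∈ Ideal.span ({dd (j : ℕ)} : Set R) :=
        Ideal.mem_span_singleton.mpr (Dvd.intro _ rfl)
      have := Ideal.sub_mem _ h1 h3
      simpa using this
    rcases hS _ hkey with h | h
    · exact absurd h (hdd0 j)
    · exact h
  -- construct the left inverse
  set inv : Fin m → R := fun j => (((hunit j).unit⁻¹ : Rˣ) : R) with hinvdef
  have hinvmul : ∀ j : Fin m, inv j * dd (j : ℕ) = 1 := fun j => (hunit j).unit.inv_mul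
  set B : Matrix (Fin m) (Fin n) R :=
    Matrix.of (fun (j : Fin m) (i : Fin n) =>
      if (j : ℕ) = (i : ℕ) then inv j else 0) with hB
  have hBD : B * Dm = 1 := by
    ext j k
    rw [Matrix.mul_apply]
    rw [Finset.sum_eq_single (Fin.castLE hmn j)]
    · by_cases hjk : j = k
      · subst hjk
        simp [hB, hDm, Matrix.one_apply, hinvmul j]
      · have hne : (j : ℕ) ≠ (k : ℕ) := fun h => hjk (Fin.ext h)
        simp [hB, hDm, hne, Matrix.one_apply, hjk]
    · intro i _ hi
      have : (j : ℕ) ≠ (i : ℕ) := by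
        intro h
        exact hi (Fin.ext h.symm)
      simp [hB, this]
    · intro h; exact absurd (Finset.mem_univ _) h
  have h1 : B * (U * A * V) = 1 := by rw [hSNF]; exact hBD
  have h2 : (B * U * A) * V = 1 := by
    simpa only [← Matrix.mul_assoc] using h1
  have h3 : V * (B * U * A) = 1 := mul_eq_one_comm.mp h2
  have hCA : (V * (B * U)) * A = 1 := by
    rw [Matrix.mul_assoc]; exact h3
  refine ⟨Matrix.toLin bN bM (V * (B * U)), ?_⟩
  have hφeq : φ = Matrix.toLin bM bN A := (Matrix.toLin_toMatrix bM bN φ).symm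
  conv_lhs => rw [hφeq]
  rw [← Matrix.toLin_mul, hCA, Matrix.toLin_one]

/-- Let `R` be a differential ring with Property (P) and
`φ : M → N` an injective morphism of finite free differential modules over `R`.
Then the induced morphism `⋀ⁿ φ : ⋀ⁿ M → ⋀ⁿ N` on `n`-th exterior powers
(realized as the restriction of `ExteriorAlgebra.map φ` to the `n`-th exterior
power submodule) is injective for every `n`. -/
theorem stmt13 (R : Type*) [CommRing R] [IsDomain R]
    (d : R →+ R) (hLeib : ∀ a b : R, d (a * b) = a * d b + b * d a)
    (hEDD : IsElementaryDivisorRing R)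
    (hS : ∀ r : R, d r ∈ Ideal.span ({r} : Set R) → r = 0 ∨ IsUnit r)
    (M N : Type*) [AddCommGroup M] [Module R M] [AddCommGroup N] [Module R N]
    [Module.Free R M] [Module.Finite R M] [Module.Free R N] [Module.Finite R N]
    (DM : M →+ M) (hDM : ∀ (r : R) (x : M), DM (r • x) = d r • x + r • DM x)
    (DN : N →+ N) (hDN : ∀ (r : R) (x : N), DN (r • x) = d r • x + r • DN x)
    (φ : M →ₗ[R] N) (hφ : ∀ x : M, φ (DM x) = DN (φ x))
    (hinj : Function.Injective φ) :
    ∀ n : ℕ, Set.InjOn (ExteriorAlgebra.map φ)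
      ((⋀[R]^n M : Submodule R (ExteriorAlgebra R M)) : Set (ExteriorAlgebra R M)) := by
  obtain ⟨ψ, hψ⟩ := stmt13_aux d hEDD hS DM hDM DN hDN φ hφ hinj
  have hL : ∀ z : ExteriorAlgebra R M,
      ExteriorAlgebra.map ψ (ExteriorAlgebra.map φ z) = z := by
    intro z
    have h := ExteriorAlgebra.map_comp_map φ ψ
    rw [hψ, ExteriorAlgebra.map_id] at h
    have h2 := DFunLike.congr_fun h z
    rw [AlgHom.comp_apply, AlgHom.id_apply] at h2
    exact h2
  intro n x hx y hy hxy
  calc x = ExteriorAlgebra.map ψ (ExteriorAlgebra.map φ x) := (hL x).symm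
  _ = ExteriorAlgebra.map ψ (ExteriorAlgebra.map φ y) := by rw [hxy]
  _ = y := hL y
end

section
/- Let K be a complete nonarchimedean valued field. There is a short exact sequence of K[[t]]_0-modules 0 \to K[[t]]_0 \to K\{t\} \times K\langle\alpha/t,t]]_0 \to K\langle\alpha/t,t\} \to 0 for any \alpha \in (0,1), where the first map is the diagonal of the inclusions and the second is the difference of the inclusions. In particular K[[t]]_0 = K\{t\} \cap K\langle\alpha/t,t]]_0 inside K\langle\alpha/t,t\}, and every element of K\langle\alpha/t,t\} is the difference of an element of K\{t\} and an element of K\langle\alpha/t,t]]_0. -/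
open Filter Topology

namespace Stmt14

variable (K : Type*) [NontriviallyNormedField K]

/-- Extension of a power series (coefficient function `ℕ → K`) to a Laurent series. -/
def ext (f : ℕ → K) : ℤ → K := fun i => if h : 0 ≤ i then f i.toNat else 0

/-- `K{t}`: power series converging on the open unit disc. -/
def ConvOpen (f : ℕ → K) : Prop :=
  ∀ γ ∈ Set.Ioo (0 : ℝ) 1, Tendsto (fun i : ℕ => ‖f i‖ * γ ^ i) atTop (𝓝 0)

/-- `K[[t]]₀`: bounded power series on the open unit disc. -/
def Bdd (f : ℕ → K) : Prop := ∃ C : ℝ, ∀ i : ℕ, ‖f i‖ ≤ C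

/-- `K⟨α/t, t]]₀`: Laurent series convergent for `|t| ≥ α` with bounded
nonnegative part. -/
def AnnBdd (α : ℝ) (g : ℤ → K) : Prop :=
  Tendsto (fun i : ℤ => ‖g i‖ * α ^ i) atBot (𝓝 0) ∧
    ∃ C : ℝ, ∀ i : ℤ, 0 ≤ i → ‖g i‖ ≤ C

/-- `K⟨α/t, t}`: Laurent series convergent on the half-open annulus `α ≤ |t| < 1`. -/
def AnnConv (α : ℝ) (h : ℤ → K) : Prop :=
  Tendsto (fun i : ℤ => ‖h i‖ * α ^ i) atBot (𝓝 0) ∧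
    ∀ γ ∈ Set.Ioo (0 : ℝ) 1, Tendsto (fun i : ℤ => ‖h i‖ * γ ^ i) atTop (𝓝 0)

/-- For `α ∈ (0,1)` there is a short exact sequence of
`K[[t]]₀`-modules `0 → K[[t]]₀ → K{t} × K⟨α/t,t]]₀ → K⟨α/t,t} → 0`, where the
first map is the diagonal of the inclusions and the second the difference of the
inclusions. In particular `K[[t]]₀ = K{t} ∩ K⟨α/t,t]]₀` inside `K⟨α/t,t}`, and
every element of `K⟨α/t,t}` is the difference of an element of `K{t}` and an
element of `K⟨α/t,t]]₀`. -/
theorem stmt14 [CompleteSpace K] [IsUltrametricDist K]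
    (α : ℝ) (hα : α ∈ Set.Ioo (0 : ℝ) 1) :
    -- every bounded power series converges on the open disc and extends to both
    -- middle terms (well-definedness of the first map)
    (∀ f : ℕ → K, Bdd K f → ConvOpen K f ∧ AnnBdd K α (ext K f)) ∧
    -- injectivity of the first map (it is the diagonal of injections)
    (∀ f f' : ℕ → K, ext K f = ext K f' → f = f') ∧
    -- exactness in the middle: a pair mapping to zero comes from `K[[t]]₀`
    (∀ (f : ℕ → K) (g : ℤ → K), ConvOpen K f → AnnBdd K α g →
      ext K f = g → Bdd K f) ∧
    -- surjectivity of the difference map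
    (∀ h : ℤ → K, AnnConv K α h →
      ∃ (f : ℕ → K) (g : ℤ → K), ConvOpen K f ∧ AnnBdd K α g ∧
        h = fun i => ext K f i - g i) := by
  refine ⟨?_, ?_, ?_, ?_⟩
  · intro f hf
    obtain ⟨C, hC⟩ := hf
    have hC0 : 0 ≤ C := le_trans (norm_nonneg (f 0)) (hC 0)
    constructor
    · intro γ hγ
      obtain ⟨hγ0, hγ1⟩ := hγ
      have hpow : Tendsto (fun i : ℕ => C * γ ^ i) atTop (𝓝 0) := by
        simpa using (tendsto_pow_atTop_nhds_zero_of_lt_one hγ0.le hγ1).const_mul C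
      refine squeeze_zero (fun i => by positivity) (fun i => ?_) hpow
      exact mul_le_mul_of_nonneg_right (hC i) (by positivity)
    · constructor
      · refine Tendsto.congr' ?_ tendsto_const_nhds
        filter_upwards [eventually_le_atBot (-1 : ℤ)] with i hi
        have : ¬ (0 : ℤ) ≤ i := by omega
        simp [ext, this]
      · exact ⟨C, fun i hi => by simp [ext, hi]; exact hC _⟩
  · intro f f' hff'
    funext n
    have := congrFun hff' (n : ℤ)
    simpa [ext] using this
  · intro f g _ hg hfg
    obtain ⟨_, C, hC⟩ := hg
    refine ⟨C, fun n => ?_⟩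
    have := hC (n : ℤ) (by positivity)
    rw [← hfg] at this
    simpa [ext] using this
  · intro h hh
    refine ⟨fun n => h n, fun i => if i < 0 then -h i else 0, ?_, ⟨?_, 0, ?_⟩, ?_⟩
    · intro γ hγ
      have := (hh.2 γ hγ).comp tendsto_natCast_atTop_atTop (α := ℕ)
      refine this.congr fun n => ?_
      simp [zpow_natCast]
    · refine Tendsto.congr' ?_ hh.1
      filter_upwards [eventually_le_atBot (-1 : ℤ)] with i hi
      have : i < 0 := by omega
      simp [this]
    · intro i hi
      have : ¬ i < 0 := by omega
      simp [this]
    · funext i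
      by_cases hi : 0 ≤ i
      · have : ¬ i < 0 := by omega
        simp [ext, hi, this, Int.toNat_of_nonneg hi]
      · have : i < 0 := by omega
        simp [ext, hi, this]

end Stmt14
end

section
/- Let K be a complete discretely valued field of mixed characteristic (0,p), M a finite free differential module over K[[t]]_0 of rank m, and n = \dim_K H^0(M \otimes K\{t\}). If M satisfies Condition (D), then every horizontal section of M \otimes K\{t\} has logarithmic growth of order at most n-1, i.e., Fil_{n-1} H^0(M\otimes K\{t\}) = H^0(M\otimes K\{t\}). -/
open Filter Topology PowerSeries

namespace Stmt15

variable (K : Type*) [NontriviallyNormedField K]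

/-- Membership in `K[[t]]₀`: a power series with bounded coefficients. -/
def Bdd (f : PowerSeries K) : Prop := ∃ C : ℝ, ∀ i : ℕ, ‖coeff i f‖ ≤ C

/-- Membership in `K{t}`: a power series converging on the open unit disc. -/
def ConvOpen (f : PowerSeries K) : Prop :=
  ∀ γ ∈ Set.Ioo (0 : ℝ) 1, Tendsto (fun i : ℕ => ‖coeff i f‖ * γ ^ i) atTop (𝓝 0)

/-- Membership in `K[[t]]_δ`: logarithmic growth of order at most `δ`. -/
def LogBdd (δ : ℝ) (f : PowerSeries K) : Prop :=
  ∃ C : ℝ, ∀ i : ℕ, ‖coeff i f‖ ≤ C * ((i : ℝ) + 1) ^ δ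

/-- A horizontal section of the differential module (of rank `m`, with differential
operator `v ↦ v' + A·v` in a fixed basis) tensored with `K{t}`: a vector of series
converging on the open unit disc, killed by the differential operator. -/
def Horiz {m : ℕ} (A : Matrix (Fin m) (Fin m) (PowerSeries K))
    (v : Fin m → PowerSeries K) : Prop :=
  (∀ i, ConvOpen K (v i)) ∧
    ∀ i, derivativeFun (v i) + ∑ j, A i j * v j = 0

/-- Condition (D) for the differential module given by the matrix `A` of rank `m`,
with `V` a `K`-basis of `H⁰(M ⊗ K{t})` of cardinality `n`: there exist a finite
free differential module `L` over `K[[t]]₀` of rank `n` (given by a matrix `B`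
with bounded entries), an injective morphism `φ : L → M` (given by the `m × n`
matrix `Φm` with bounded entries, intertwining the differential operators), and an
isomorphism `θ : L ⊗ K{t} → P = H⁰(M ⊗ K{t}) ⊗ K{t}` (given by the invertible
matrix `Θ` over `K{t}`, horizontal for the differential operator of `L` and the
trivial one of `P`) such that `Φ ∘ θ = φ ⊗ id`. -/
def CondD {m n : ℕ} (A : Matrix (Fin m) (Fin m) (PowerSeries K))
    (V : Fin n → (Fin m → PowerSeries K)) : Prop :=
  ∃ (B : Matrix (Fin n) (Fin n) (PowerSeries K))
    (Φm : Matrix (Fin m) (Fin n) (PowerSeries K))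
    (Θ Θinv : Matrix (Fin n) (Fin n) (PowerSeries K)),
      (∀ i j, Bdd K (B i j)) ∧
      (∀ i j, Bdd K (Φm i j)) ∧
      -- `φ` is injective
      (∀ x : Fin n → PowerSeries K, Φm.mulVec x = 0 → x = 0) ∧
      -- `φ` is a morphism of differential modules: `D_M ∘ φ = φ ∘ D_L`
      (∀ i j, derivativeFun (Φm i j) + ∑ k, A i k * Φm k j = ∑ k, Φm i k * B k j) ∧
      -- `θ` is an isomorphism over `K{t}` ...
      (∀ i j, ConvOpen K (Θ i j)) ∧ (∀ i j, ConvOpen K (Θinv i j)) ∧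
      Θ * Θinv = 1 ∧ Θinv * Θ = 1 ∧
      -- ... of differential modules (the differential operator of `P` is trivial
      -- in the horizontal basis `V`)
      (∀ i j, derivativeFun (Θ i j) = ∑ k, Θ i k * B k j) ∧
      -- compatibility `Φ ∘ θ = φ ⊗ id`
      (∀ i j, Φm i j = ∑ k, V k i * Θ k j)

lemma derivFun_zero : derivativeFun (0 : PowerSeries K) = 0 := by
  exact (derivative K).map_zero

lemma deriv_sum {ι : Type*} (s : Finset ι) (f : ι → PowerSeries K) :
    derivativeFun (∑ i ∈ s, f i) = ∑ i ∈ s, derivativeFun (f i) := by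
  classical
  induction s using Finset.cons_induction with
  | empty => simp [derivFun_zero]
  | cons a s ha ih => rw [Finset.sum_cons, derivativeFun_add, ih, Finset.sum_cons]

lemma convOpen_zero : ConvOpen K (0 : PowerSeries K) := by
  unfold ConvOpen
  intro γ hγ
  simpa using tendsto_const_nhds

lemma convOpen_add {f g : PowerSeries K} (hf : ConvOpen K f) (hg : ConvOpen K g) :
    ConvOpen K (f + g) := by
  unfold ConvOpen
  intro γ hγ
  have h := (hf γ hγ).add (hg γ hγ)
  rw [add_zero] at h
  obtain ⟨hγ0, hγ1⟩ := hγ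
  refine squeeze_zero (fun i => mul_nonneg (norm_nonneg _) (pow_nonneg hγ0.le i))
    (fun i => ?_) h
  rw [map_add]
  have hγp : (0:ℝ) ≤ γ ^ i := pow_nonneg hγ0.le i
  calc ‖coeff i f + coeff i g‖ * γ ^ i
      ≤ (‖coeff i f‖ + ‖coeff i g‖) * γ ^ i :=
        mul_le_mul_of_nonneg_right (norm_add_le _ _) hγp
    _ = ‖coeff i f‖ * γ ^ i + ‖coeff i g‖ * γ ^ i := by ring

lemma convOpen_sum {ι : Type*} (s : Finset ι) (f : ι → PowerSeries K)
    (h : ∀ i ∈ s, ConvOpen K (f i)) : ConvOpen K (∑ i ∈ s, f i) := by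
  classical
  induction s using Finset.cons_induction with
  | empty => simpa using convOpen_zero K
  | cons a s ha ih =>
      rw [Finset.sum_cons]
      exact convOpen_add K (h a (Finset.mem_cons_self _ _))
        (ih fun i hi => h i (Finset.mem_cons_of_mem hi))

lemma convOpen_mul_C {f : PowerSeries K} (c : K) (hf : ConvOpen K f) :
    ConvOpen K (f * C c) := by
  unfold ConvOpen
  intro γ hγ
  have h := (hf γ hγ).const_mul ‖c‖
  rw [mul_zero] at h
  refine h.congr fun i => ?_
  rw [mul_comm f, coeff_C_mul, norm_mul]
  ring

lemma logBdd_sum {ι : Type*} (δ : ℝ) (s : Finset ι) (f : ι → PowerSeries K)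
    (h : ∀ i ∈ s, LogBdd K δ (f i)) : LogBdd K δ (∑ i ∈ s, f i) := by
  classical
  induction s using Finset.cons_induction with
  | empty => exact ⟨0, fun i => by simp⟩
  | cons a s ha ih =>
      obtain ⟨C1, hC1⟩ := h a (Finset.mem_cons_self _ _)
      obtain ⟨C2, hC2⟩ := ih fun i hi => h i (Finset.mem_cons_of_mem hi)
      refine ⟨C1 + C2, fun i => ?_⟩
      rw [Finset.sum_cons, map_add, add_mul]
      exact (norm_add_le _ _).trans (add_le_add (hC1 i) (hC2 i))

lemma logBdd_bdd_mul [IsUltrametricDist K] {δ : ℝ} (hδ : 0 ≤ δ)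
    {f g : PowerSeries K} (hf : Bdd K f) (hg : LogBdd K δ g) : LogBdd K δ (f * g) := by
  obtain ⟨Cf, hCf⟩ := hf
  obtain ⟨Cg, hCg⟩ := hg
  refine ⟨max Cf 0 * max Cg 0, fun i => ?_⟩
  have hpos : (0:ℝ) ≤ ((i:ℝ) + 1) ^ δ := Real.rpow_nonneg (by positivity) δ
  rw [coeff_mul]
  refine IsUltrametricDist.norm_sum_le_of_forall_le_of_nonneg (by positivity) ?_
  rintro ⟨a, b⟩ hab
  rw [Finset.HasAntidiagonal.mem_antidiagonal] at hab
  have hb : (b:ℝ) + 1 ≤ (i:ℝ) + 1 := by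
    have : b ≤ i := by omega
    exact_mod_cast Nat.succ_le_succ this
  have h1 : ‖coeff a f‖ ≤ max Cf 0 := (hCf a).trans (le_max_left _ _)
  have h2 : ‖coeff b g‖ ≤ max Cg 0 * ((i:ℝ) + 1) ^ δ := by
    refine (hCg b).trans ?_
    have hrb : ((b:ℝ) + 1) ^ δ ≤ ((i:ℝ) + 1) ^ δ :=
      Real.rpow_le_rpow (by positivity) hb hδ
    calc Cg * ((b:ℝ) + 1) ^ δ ≤ max Cg 0 * ((b:ℝ) + 1) ^ δ :=
          mul_le_mul_of_nonneg_right (le_max_left _ _) (Real.rpow_nonneg (by positivity) δ)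
      _ ≤ max Cg 0 * ((i:ℝ) + 1) ^ δ :=
          mul_le_mul_of_nonneg_left hrb (le_max_right _ _)
  calc ‖coeff a f * coeff b g‖ = ‖coeff a f‖ * ‖coeff b g‖ := norm_mul _ _
    _ ≤ max Cf 0 * (max Cg 0 * ((i:ℝ) + 1) ^ δ) :=
        mul_le_mul h1 h2 (norm_nonneg _) (le_max_right _ _)
    _ = max Cf 0 * max Cg 0 * ((i:ℝ) + 1) ^ δ := by ring

lemma matrix_deriv_mul {n : ℕ} (M N : Matrix (Fin n) (Fin n) (PowerSeries K)) :
    (M * N).map derivativeFun =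
      M.map derivativeFun * N + M * N.map derivativeFun := by
  refine Matrix.ext fun i j => ?_
  simp only [Matrix.map_apply, Matrix.mul_apply, Matrix.add_apply]
  rw [deriv_sum K Finset.univ (fun k => M i k * N k j)]
  refine (Finset.sum_congr rfl fun k _ => ?_).trans
    (Finset.sum_add_distrib (f := fun k => derivativeFun (M i k) * N k j)
      (g := fun k => M i k * derivativeFun (N k j)))
  rw [derivativeFun_mul, smul_eq_mul, smul_eq_mul]
  ring


/-- Let `K` be a complete discretely valued field of mixed
characteristic `(0,p)`, `M` a finite free differential module over `K[[t]]₀` of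
rank `m` (given by the matrix `A` with bounded entries) and `n = dim_K H⁰(M ⊗ K{t})`
(witnessed by the basis `V` of horizontal sections). Granting Dwork's theorem
(`hDwork`: for solvable modules of rank `r`, all horizontal sections have
logarithmic growth of order at most `r - 1`), if `M` satisfies Condition (D), then
every horizontal section of `M ⊗ K{t}` has logarithmic growth of order at most
`n - 1`, i.e. `Fil_{n-1} H⁰(M ⊗ K{t}) = H⁰(M ⊗ K{t})`. -/
theorem stmt15 [CompleteSpace K] [IsUltrametricDist K] [CharZero K]
    (p : ℕ) (hp : p.Prime) (hpK : ‖(p : K)‖ < 1)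
    (hdisc : ∃ c : ℝ, 1 < c ∧ ∀ x : K, x ≠ 0 → ∃ k : ℤ, ‖x‖ = c ^ k)
    (m n : ℕ) (A : Matrix (Fin m) (Fin m) (PowerSeries K))
    (hA : ∀ i j, Bdd K (A i j))
    -- `V` is a `K`-basis of `H⁰(M ⊗ K{t})`, so `n = dim_K H⁰(M ⊗ K{t})`
    (V : Fin n → (Fin m → PowerSeries K))
    (hVhoriz : ∀ k, Horiz K A (V k))
    (hVli : LinearIndependent K V)
    (hVspan : ∀ v : Fin m → PowerSeries K, Horiz K A v →
      ∃ c : Fin n → K, v = fun i => ∑ k, PowerSeries.C (c k) * V k i)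
    -- Dwork's theorem, taken as given
    (hDwork : ∀ (r : ℕ) (B : Matrix (Fin r) (Fin r) (PowerSeries K)),
      (∀ i j, Bdd K (B i j)) →
      (∃ W : Fin r → (Fin r → PowerSeries K),
        (∀ k, Horiz K B (W k)) ∧ LinearIndependent K W) →
      ∀ w : Fin r → PowerSeries K, Horiz K B w →
        ∀ i, LogBdd K ((r : ℝ) - 1) (w i))
    -- Condition (D)
    (hD : CondD K A V) :
    ∀ v : Fin m → PowerSeries K, Horiz K A v →
      ∀ i, LogBdd K ((n : ℝ) - 1) (v i) := by
  obtain ⟨B, Φm, Θ, Θinv, hB, hΦ, hinj, hmorph, hΘc, hΘinvc, hTT, hTT', hΘhor, hcompat⟩ := hD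
  intro v hv i
  obtain ⟨c, hc⟩ := hVspan v hv
  rcases Nat.eq_zero_or_pos n with hn | hn
  · subst hn
    refine ⟨0, fun j => ?_⟩
    rw [hc]
    simp
  · have hδ : (0:ℝ) ≤ (n:ℝ) - 1 := by
      have : (1:ℝ) ≤ (n:ℝ) := by exact_mod_cast hn
      linarith
    -- derivative of Θ as a matrix identity
    have hd1 : Θ.map derivativeFun = Θ * B := by
      refine Matrix.ext fun a b => ?_
      simp only [Matrix.map_apply, Matrix.mul_apply]
      exact hΘhor a b
    have hone : ((1 : Matrix (Fin n) (Fin n) (PowerSeries K)).map derivativeFun) = 0 := by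
      refine Matrix.ext fun a b => ?_
      simp only [Matrix.map_apply, Matrix.one_apply, Matrix.zero_apply]
      split_ifs
      · exact derivativeFun_one
      · exact derivFun_zero K
    -- Θinv is horizontal for -B
    have hkey : Θinv.map derivativeFun = -(B * Θinv) := by
      have h := matrix_deriv_mul K Θ Θinv
      rw [hTT, hone, hd1] at h
      have h3 : Θ * (Θinv.map derivativeFun) = -(Θ * B * Θinv) :=
        eq_neg_of_add_eq_zero_right h.symm
      calc Θinv.map derivativeFun = (Θinv * Θ) * Θinv.map derivativeFun := by
            rw [hTT', one_mul]
        _ = Θinv * (Θ * Θinv.map derivativeFun) := by rw [mul_assoc]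
        _ = Θinv * -(Θ * B * Θinv) := by rw [h3]
        _ = -(Θinv * (Θ * (B * Θinv))) := by rw [mul_neg, mul_assoc]
        _ = -(B * Θinv) := by rw [← mul_assoc, hTT', one_mul]
    have hThor' : ∀ a b, derivativeFun (Θinv a b) + ∑ k, B a k * Θinv k b = 0 := by
      intro a b
      have h := congrFun (congrFun hkey a) b
      simp only [Matrix.map_apply, Matrix.neg_apply, Matrix.mul_apply] at h
      rw [h]
      exact neg_add_cancel _
    -- the columns of Θinv form a horizontal basis for B
    set W : Fin n → Fin n → PowerSeries K := fun j a => Θinv a j with hW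
    have hWhoriz : ∀ j, Horiz K B (W j) :=
      fun j => ⟨fun a => hΘinvc a j, fun a => hThor' a j⟩
    have hWli : LinearIndependent K W := by
      rw [Fintype.linearIndependent_iff]
      intro g hg j
      have hg' : Θinv.mulVec (fun k => PowerSeries.C (g k)) = 0 := by
        funext a
        have h := congrFun hg a
        simp only [Finset.sum_apply, Pi.smul_apply, Pi.zero_apply, hW] at h
        simpa [Matrix.mulVec, dotProduct, smul_eq_C_mul, mul_comm] using h
      have h2 := congrArg (fun X => Θ.mulVec X) hg'
      simp only [Matrix.mulVec_mulVec, hTT, Matrix.one_mulVec, Matrix.mulVec_zero] at h2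
      have h3 : PowerSeries.C (g j) = 0 := congrFun h2 j
      exact (map_eq_zero_iff PowerSeries.C PowerSeries.C_injective).mp h3
    have hDw := hDwork n B hB ⟨W, hWhoriz, hWli⟩
    -- the horizontal section w of L mapping to v
    set c' : Fin n → PowerSeries K := fun k => PowerSeries.C (c k) with hc'
    set w : Fin n → PowerSeries K := Θinv.mulVec c' with hwdef
    have hwe : ∀ a, w a = ∑ j, Θinv a j * c' j := fun a => rfl
    have hwconv : ∀ a, ConvOpen K (w a) := by
      intro a
      rw [hwe]
      exact convOpen_sum K _ _ fun j _ => convOpen_mul_C K _ (hΘinvc a j)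
    have hdw : (fun a => derivativeFun (w a)) = (Θinv.map derivativeFun).mulVec c' := by
      funext a
      simp only [Matrix.mulVec, dotProduct, Matrix.map_apply]
      rw [hwe, deriv_sum K Finset.univ (fun j => Θinv a j * c' j)]
      refine Finset.sum_congr rfl fun j _ => ?_
      rw [derivativeFun_mul]
      simp [hc', (show derivativeFun (C (c j)) = 0 from derivative_C), smul_eq_mul, mul_comm]
    have hwhoriz : Horiz K B w := by
      refine ⟨hwconv, fun a => ?_⟩
      have h := congrFun hdw a
      rw [hkey, Matrix.neg_mulVec, ← Matrix.mulVec_mulVec] at h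
      rw [h]
      have : (B.mulVec (Θinv.mulVec c')) a = ∑ j, B a j * w j := by
        simp [Matrix.mulVec, dotProduct, hwdef]
      rw [Pi.neg_apply, this]
      exact neg_add_cancel _
    have hw := hDw w hwhoriz
    -- v = Φm.mulVec w
    set Vm : Matrix (Fin m) (Fin n) (PowerSeries K) := Matrix.of fun a k => V k a with hVm
    have hΦ' : Φm = Vm * Θ := by
      refine Matrix.ext fun a b => ?_
      simp only [Matrix.mul_apply, hVm, Matrix.of_apply]
      exact hcompat a b
    have hvw : v = Φm.mulVec w := by
      rw [hwdef, hΦ', Matrix.mulVec_mulVec, Matrix.mul_assoc, hTT, Matrix.mul_one, hc]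
      funext a
      simp only [Matrix.mulVec, dotProduct, hVm, Matrix.of_apply, hc']
      exact Finset.sum_congr rfl fun k _ => mul_comm _ _
    have hvi : v i = ∑ j, Φm i j * w j := by rw [hvw]; rfl
    rw [hvi]
    exact logBdd_sum K _ _ _ fun j _ => logBdd_bdd_mul K hδ (hΦ i j) (hw j)


end Stmt15
end
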